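/- (Tightness of McCormick envelopes) For boxes $[\ell_x, u_x] \times [\ell_y, u_y]$, the McCormick inequalities describe exactly the convex hull of the set $\{(x, y, xy) : \ell_x \le x \le u_x,\ \ell_y \le y \le u_y\}$. -/

import Mathlib

theorem mccormick_convex_hull (lx ux ly uy : ℝ) (hx : lx ≤ ux) (hy : ly ≤ uy) :
    {p : ℝ × ℝ × ℝ | lx ≤ p.1 ∧ p.1 ≤ ux ∧ ly ≤ p.2.1 ∧ p.2.1 ≤ uy ∧
        lx * p.2.1 + ly * p.1 - lx * ly ≤ p.2.2 ∧
        ux * p.2.1 + uy * p.1 - ux * uy ≤ p.2.2 ∧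
        p.2.2 ≤ lx * p.2.1 + uy * p.1 - lx * uy ∧
        p.2.2 ≤ ux * p.2.1 + ly * p.1 - ux * ly}
      = convexHull ℝ {p : ℝ × ℝ × ℝ | lx ≤ p.1 ∧ p.1 ≤ ux ∧ ly ≤ p.2.1 ∧ p.2.1 ≤ uy ∧
          p.2.2 = p.1 * p.2.1} := by
  set S : Set (ℝ × ℝ × ℝ) := {p : ℝ × ℝ × ℝ | lx ≤ p.1 ∧ p.1 ≤ ux ∧ ly ≤ p.2.1 ∧ p.2.1 ≤ uy ∧
          p.2.2 = p.1 * p.2.1} with hS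
  apply Set.Subset.antisymm
  · rintro ⟨x, y, w⟩ ⟨h1, h2, h3, h4, h5, h6, h7, h8⟩
    simp only [Set.mem_setOf_eq] at h1 h2 h3 h4 h5 h6 h7 h8
    by_cases hdx : lx = ux
    · apply subset_convexHull
      have hxl : x = lx := le_antisymm (hdx ▸ h2) h1
      refine ⟨h1, h2, h3, h4, ?_⟩
      simp only
      subst hxl
      nlinarith [h5, h7]
    · by_cases hdy : ly = uy
      · apply subset_convexHull
        have hyl : y = ly := le_antisymm (hdy ▸ h4) h3
        refine ⟨h1, h2, h3, h4, ?_⟩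
        simp only
        subst hyl
        nlinarith [h5, h8]
      · have hdx0 : (0:ℝ) < ux - lx := lt_of_le_of_ne (by linarith) (by intro h; exact hdx (by linarith))
        have hdy0 : (0:ℝ) < uy - ly := lt_of_le_of_ne (by linarith) (by intro h; exact hdy (by linarith))
        have hdxne : ux - lx ≠ 0 := ne_of_gt hdx0
        have hdyne : uy - ly ≠ 0 := ne_of_gt hdy0
        have hD0 : (0:ℝ) < (ux - lx) * (uy - ly) := mul_pos hdx0 hdy0
        have hnonneg : ∀ i ∈ Finset.univ,
            0 ≤ (![((ux - lx) * (uy - ly) - (x - lx) * (uy - ly) - (y - ly) * (ux - lx)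
                  + (w - (lx * y + ly * x - lx * ly))) / ((ux - lx) * (uy - ly)),
                ((y - ly) * (ux - lx) - (w - (lx * y + ly * x - lx * ly))) / ((ux - lx) * (uy - ly)),
                ((x - lx) * (uy - ly) - (w - (lx * y + ly * x - lx * ly))) / ((ux - lx) * (uy - ly)),
                (w - (lx * y + ly * x - lx * ly)) / ((ux - lx) * (uy - ly))] : Fin 4 → ℝ) i := by
          intro i _
          fin_cases i <;> simp only [Matrix.cons_val_zero, Matrix.cons_val_one, Matrix.head_cons] <;>
            refine div_nonneg ?_ (le_of_lt hD0) <;> nlinarith [h5, h6, h7, h8]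
        have hsum : ∑ i ∈ Finset.univ,
            (![((ux - lx) * (uy - ly) - (x - lx) * (uy - ly) - (y - ly) * (ux - lx)
                  + (w - (lx * y + ly * x - lx * ly))) / ((ux - lx) * (uy - ly)),
                ((y - ly) * (ux - lx) - (w - (lx * y + ly * x - lx * ly))) / ((ux - lx) * (uy - ly)),
                ((x - lx) * (uy - ly) - (w - (lx * y + ly * x - lx * ly))) / ((ux - lx) * (uy - ly)),
                (w - (lx * y + ly * x - lx * ly)) / ((ux - lx) * (uy - ly))] : Fin 4 → ℝ) i = 1 := by
          simp only [Fin.sum_univ_four, Matrix.cons_val_zero, Matrix.cons_val_one,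
            Matrix.head_cons, Matrix.cons_val_two, Matrix.tail_cons, Matrix.cons_val_three]
          rw [← add_div, ← add_div, ← add_div,
            div_eq_one_iff_eq (ne_of_gt hD0)]
          ring
        have hmem : ∀ i ∈ Finset.univ,
            (![((lx, ly, lx * ly) : ℝ × ℝ × ℝ), (lx, uy, lx * uy), (ux, ly, ux * ly),
              (ux, uy, ux * uy)] : Fin 4 → ℝ × ℝ × ℝ) i ∈ S := by
          intro i _
          fin_cases i <;> simp [hS, Set.mem_setOf_eq, hx, hy, mul_comm]
        have hcomb := (convex_convexHull ℝ S).sum_mem hnonneg hsum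
          (fun i hi => subset_convexHull ℝ S (hmem i hi))
        have key : ((x, y, w) : ℝ × ℝ × ℝ) = ∑ i ∈ Finset.univ,
            (![((ux - lx) * (uy - ly) - (x - lx) * (uy - ly) - (y - ly) * (ux - lx)
                  + (w - (lx * y + ly * x - lx * ly))) / ((ux - lx) * (uy - ly)),
                ((y - ly) * (ux - lx) - (w - (lx * y + ly * x - lx * ly))) / ((ux - lx) * (uy - ly)),
                ((x - lx) * (uy - ly) - (w - (lx * y + ly * x - lx * ly))) / ((ux - lx) * (uy - ly)),
                (w - (lx * y + ly * x - lx * ly)) / ((ux - lx) * (uy - ly))] : Fin 4 → ℝ) i •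
            (![((lx, ly, lx * ly) : ℝ × ℝ × ℝ), (lx, uy, lx * uy), (ux, ly, ux * ly),
              (ux, uy, ux * uy)] : Fin 4 → ℝ × ℝ × ℝ) i := by
          simp only [Fin.sum_univ_four, Matrix.cons_val_zero, Matrix.cons_val_one,
            Matrix.head_cons, Matrix.cons_val_two, Matrix.tail_cons, Matrix.cons_val_three,
            Prod.smul_mk, smul_eq_mul, Prod.mk_add_mk, Prod.ext_iff]
          refine ⟨?_, ?_, ?_⟩ <;> (field_simp; try ring)
        rw [key]
        exact hcomb
  · apply convexHull_min
    · rintro ⟨x, y, w⟩ ⟨h1, h2, h3, h4, h5⟩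
      simp only [Set.mem_setOf_eq] at h5 ⊢
      refine ⟨h1, h2, h3, h4, ?_, ?_, ?_, ?_⟩ <;>
        nlinarith [mul_nonneg (sub_nonneg.2 h1) (sub_nonneg.2 h3),
          mul_nonneg (sub_nonneg.2 h2) (sub_nonneg.2 h4),
          mul_nonneg (sub_nonneg.2 h1) (sub_nonneg.2 h4),
          mul_nonneg (sub_nonneg.2 h2) (sub_nonneg.2 h3)]
    · rintro ⟨px, py, pw⟩ hp ⟨qx, qy, qw⟩ hq a c ha hc hac
      obtain ⟨p1, p2, p3, p4, p5, p6, p7, p8⟩ := hp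
      obtain ⟨q1, q2, q3, q4, q5, q6, q7, q8⟩ := hq
      dsimp only at p1 p2 p3 p4 p5 p6 p7 p8 q1 q2 q3 q4 q5 q6 q7 q8
      simp only [hS, Set.mem_setOf_eq, Prod.fst_add, Prod.snd_add, Prod.smul_mk, smul_eq_mul,
        Prod.mk_add_mk]
      have e : ∀ r : ℝ, a * r + c * r = r := fun r => by rw [← add_mul, hac, one_mul]
      refine ⟨?_, ?_, ?_, ?_, ?_, ?_, ?_, ?_⟩
      · linarith [mul_le_mul_of_nonneg_left p1 ha, mul_le_mul_of_nonneg_left q1 hc, e lx]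
      · linarith [mul_le_mul_of_nonneg_left p2 ha, mul_le_mul_of_nonneg_left q2 hc, e ux]
      · linarith [mul_le_mul_of_nonneg_left p3 ha, mul_le_mul_of_nonneg_left q3 hc, e ly]
      · linarith [mul_le_mul_of_nonneg_left p4 ha, mul_le_mul_of_nonneg_left q4 hc, e uy]
      · linarith [mul_le_mul_of_nonneg_left p5 ha, mul_le_mul_of_nonneg_left q5 hc, e (lx * ly)]
      · linarith [mul_le_mul_of_nonneg_left p6 ha, mul_le_mul_of_nonneg_left q6 hc, e (ux * uy)]
      · linarith [mul_le_mul_of_nonneg_left p7 ha, mul_le_mul_of_nonneg_left q7 hc, e (lx * uy)]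
      · linarith [mul_le_mul_of_nonneg_left p8 ha, mul_le_mul_of_nonneg_left q8 hc, e (ux * ly)]
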